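/- Let I be an ideal in ℂ[z_1, ..., z_K] such that z_i^2 − z_i ∈ I for every i ∈ {1, ..., K}. Then I is a radical ideal. -/

import Mathlib

open MvPolynomial

namespace IdempotentGensAux

variable {K : ℕ}

/-- The 0/1 point of `ℂ^K` corresponding to a Boolean vector. -/
noncomputable def pt (x : Fin K → Bool) : Fin K → ℂ := fun i => if x i then 1 else 0

/-- The multilinear indicator polynomial of the point `pt x`. -/
noncomputable def eIdem (x : Fin K → Bool) : MvPolynomial (Fin K) ℂ :=
  ∏ i, if x i then X i else 1 - X i

/-- The ideal generated by the idempotency relations. -/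
noncomputable def Jideal (K : ℕ) : Ideal (MvPolynomial (Fin K) ℂ) :=
  Ideal.span (Set.range fun i : Fin K => X i ^ 2 - X i)

lemma sum_eIdem : (∑ x : Fin K → Bool, eIdem x) = 1 := by
  classical
  have h := Finset.prod_univ_sum (fun _ : Fin K => (Finset.univ : Finset Bool))
    (fun i b => if b then (X i : MvPolynomial (Fin K) ℂ) else 1 - X i)
  rw [Fintype.piFinset_univ] at h
  simp only [Fintype.sum_bool, if_true, Bool.false_eq_true, if_false] at h
  have hone : ∀ i : Fin K, (X i : MvPolynomial (Fin K) ℂ) + (1 - X i) = 1 := fun i => by ring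
  simp only [hone, Finset.prod_const_one] at h
  simpa [eIdem] using h.symm

lemma eval_eIdem (x y : Fin K → Bool) :
    eval (pt y) (eIdem x) = if x = y then 1 else 0 := by
  classical
  rw [eIdem, map_prod]
  have hfac : ∀ i : Fin K,
      eval (pt y) (if x i then (X i : MvPolynomial (Fin K) ℂ) else 1 - X i)
      = if x i = y i then 1 else 0 := by
    intro i
    rcases hx : x i <;> rcases hy : y i <;> simp [hx, hy, pt]
  simp_rw [hfac]
  rw [Finset.prod_boole]
  by_cases hxy : x = y
  · simp [hxy]
  · have hne : ¬ ∀ i ∈ (Finset.univ : Finset (Fin K)), x i = y i :=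
      fun hh => hxy (funext fun i => hh i (Finset.mem_univ i))
    rw [if_neg hne, if_neg hxy]

lemma e_mul_X_mem (x : Fin K → Bool) (i : Fin K) :
    eIdem x * X i - (if x i then eIdem x else 0) ∈ Jideal K := by
  classical
  have hbasic : (X i : MvPolynomial (Fin K) ℂ) ^ 2 - X i ∈ Jideal K :=
    Ideal.subset_span ⟨i, rfl⟩
  have hsplit : eIdem x = (if x i then (X i : MvPolynomial (Fin K) ℂ) else 1 - X i)
      * ∏ j ∈ Finset.univ.erase i, (if x j then (X j : MvPolynomial (Fin K) ℂ) else 1 - X j) := by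
    rw [eIdem]; exact (Finset.mul_prod_erase _ _ (Finset.mem_univ i)).symm
  by_cases hxi : x i = true
  · have heq : eIdem x * X i - (if x i then eIdem x else 0)
        = ((X i : MvPolynomial (Fin K) ℂ) ^ 2 - X i)
          * ∏ j ∈ Finset.univ.erase i, (if x j then (X j : MvPolynomial (Fin K) ℂ) else 1 - X j) := by
      rw [hsplit]
      simp only [hxi, if_true]
      ring
    rw [heq]; exact Ideal.mul_mem_right _ _ hbasic
  · have hxi' : x i = false := by simpa using hxi
    have heq : eIdem x * X i - (if x i then eIdem x else 0)
        = (-((X i : MvPolynomial (Fin K) ℂ) ^ 2 - X i))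
          * ∏ j ∈ Finset.univ.erase i, (if x j then (X j : MvPolynomial (Fin K) ℂ) else 1 - X j) := by
      rw [hsplit]
      simp only [hxi', Bool.false_eq_true, if_false]
      ring
    rw [heq]; exact Ideal.mul_mem_right _ _ (neg_mem hbasic)

lemma interp (f : MvPolynomial (Fin K) ℂ) :
    f - ∑ x : Fin K → Bool, C (eval (pt x) f) * eIdem x ∈ Jideal K := by
  classical
  induction f using MvPolynomial.induction_on with
  | C a =>
      have : (C a : MvPolynomial (Fin K) ℂ)
          - ∑ x : Fin K → Bool, C (eval (pt x) (C a)) * eIdem x = 0 := by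
        simp only [eval_C, ← Finset.mul_sum, sum_eIdem, mul_one, sub_self]
      rw [this]; exact zero_mem _
  | add p q hp hq =>
      have heq : (p + q) - ∑ x : Fin K → Bool, C (eval (pt x) (p + q)) * eIdem x
          = (p - ∑ x : Fin K → Bool, C (eval (pt x) p) * eIdem x)
            + (q - ∑ x : Fin K → Bool, C (eval (pt x) q) * eIdem x) := by
        simp only [map_add, C_add, add_mul, Finset.sum_add_distrib]
        ring
      rw [heq]; exact add_mem hp hq
  | mul_X p i hp =>
      have h1 : (p - ∑ x : Fin K → Bool, C (eval (pt x) p) * eIdem x) * X i ∈ Jideal K :=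
        Ideal.mul_mem_right _ _ hp
      rw [sub_mul, Finset.sum_mul] at h1
      have h2 : (∑ x : Fin K → Bool, C (eval (pt x) p) * eIdem x * X i)
          - ∑ x : Fin K → Bool, C (eval (pt x) (p * X i)) * eIdem x ∈ Jideal K := by
        rw [← Finset.sum_sub_distrib]
        refine Ideal.sum_mem _ fun x _ => ?_
        have heq : C (eval (pt x) p) * eIdem x * X i - C (eval (pt x) (p * X i)) * eIdem x
            = C (eval (pt x) p) * (eIdem x * X i - (if x i then eIdem x else 0)) := by
          rw [map_mul, eval_X]
          by_cases hxi : x i = true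
          · simp only [pt, hxi, if_true, mul_one]
            ring
          · have hxi' : x i = false := by simpa using hxi
            simp only [pt, hxi', Bool.false_eq_true, if_false, mul_zero, map_zero]
            ring
        rw [heq]
        exact Ideal.mul_mem_left _ _ (e_mul_X_mem x i)
      have := add_mem h1 h2
      rwa [sub_add_sub_cancel] at this

end IdempotentGensAux

/-- If I is an ideal of ℂ[z_1,...,z_K] containing z_i^2 - z_i
for every i, then I is a radical ideal. -/
theorem ideal_isRadical_of_idempotent_gens {K : ℕ}
    (I : Ideal (MvPolynomial (Fin K) ℂ))
    (h : ∀ i : Fin K, MvPolynomial.X i ^ 2 - MvPolynomial.X i ∈ I) :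
    I.IsRadical := by
  classical
  open MvPolynomial IdempotentGensAux in
  intro f hf
  obtain ⟨n, hn⟩ := hf
  have hJI : Jideal K ≤ I := by
    rw [Jideal, Ideal.span_le]
    rintro _ ⟨i, rfl⟩
    exact h i
  set a : (Fin K → Bool) → ℂ := fun x => eval (pt x) f with ha
  set r : MvPolynomial (Fin K) ℂ :=
    (∑ x : Fin K → Bool, C ((a x)⁻¹ ^ n * a x) * eIdem x) * f ^ n with hr
  have hrI : r ∈ I := Ideal.mul_mem_left _ _ hn
  have hev : ∀ x : Fin K → Bool, eval (pt x) r = a x := by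
    intro x
    rw [hr, map_mul, map_sum, map_pow]
    simp only [map_mul, eval_C, eval_eIdem, mul_ite, mul_one, mul_zero]
    simp only [Finset.sum_ite_eq', Finset.mem_univ, if_true]
    have hax : eval (pt x) f = a x := rfl
    rw [hax]
    by_cases h0 : a x = 0
    · rcases n with _ | m
      · simp
      · simp [h0, zero_pow]
    · have hpow : a x ^ n ≠ 0 := pow_ne_zero _ h0
      field_simp
      rw [div_pow, one_pow, one_div_mul_cancel hpow]
  have hfr : f - r ∈ Jideal K := by
    have h1 := interp (f - r)
    have h2 : ∀ x : Fin K → Bool, eval (pt x) (f - r) = 0 := by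
      intro x
      rw [map_sub, hev x]
      have hax : eval (pt x) f = a x := rfl
      rw [hax, sub_self]
    simp_rw [h2] at h1
    simpa using h1
  have : (f - r) + r ∈ I := add_mem (hJI hfr) hrI
  simpa using this
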